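/- Let x, y ≥ 0 and c > 0, and let u⁰ be any real. If ln(x + y + c) ≥ z + u and y + c ≤ exp(u⁰)·(u - u⁰ + 1) hold for some reals z, u, then ln(1 + x/(y + c)) ≥ z. That is, the convexified constraints of Proposition 3 are an inner (conservative) approximation of the original rate constraint. -/
import Mathlib

theorem stmt_5 (x y c u₀ z u : ℝ) (hx : 0 ≤ x) (hy : 0 ≤ y) (hc : 0 < c)
    (h1 : Real.log (x + y + c) ≥ z + u)
    (h2 : y + c ≤ Real.exp u₀ * (u - u₀ + 1)) :
    Real.log (1 + x / (y + c)) ≥ z := by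
  have hyc : 0 < y + c := by linarith
  have hle : y + c ≤ Real.exp u := by
    calc y + c ≤ Real.exp u₀ * (u - u₀ + 1) := h2
    _ ≤ Real.exp u₀ * Real.exp (u - u₀) := by
        have := Real.add_one_le_exp (u - u₀)
        nlinarith [Real.exp_pos u₀]
    _ = Real.exp u := by rw [← Real.exp_add]; ring_nf
  have hlog : Real.log (y + c) ≤ u := by
    have := Real.log_le_log hyc hle
    rwa [Real.log_exp] at this
  have h3 : (1 : ℝ) + x / (y + c) = (x + y + c) / (y + c) := by
    field_simp; ring
  rw [h3, Real.log_div (by positivity) (ne_of_gt hyc)]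
  linarith
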